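/- Suppose symmetric positive definite 3×3 matrices P_a, P_b and a matrix P_c satisfy P_a P_b^{-1} + P_b^{-1} P_a = -σ_ω^2 σ_b^{-2} I + P_b^2 and P_c = -σ_b^2 P_a P_b^{-1}, where σ_ω, σ_b > 0. Then P_a and P_b commute (are simultaneously diagonalizable) and P_c is symmetric negative definite. -/

import Mathlib

open Matrix

section aux

variable {n : Type*} [Fintype n] [DecidableEq n]

lemma myTraceNonneg (M : Matrix n n ℝ) : 0 ≤ (Mᵀ * M).trace := by
  rw [Matrix.trace]
  refine Finset.sum_nonneg fun i _ => ?_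
  simp only [Matrix.diag_apply, Matrix.mul_apply, Matrix.transpose_apply]
  exact Finset.sum_nonneg fun j _ => mul_self_nonneg _

lemma myTraceZero {M : Matrix n n ℝ} (h : (Mᵀ * M).trace = 0) : M = 0 := by
  rw [Matrix.trace] at h
  have h1 : ∀ i ∈ Finset.univ, (Mᵀ * M).diag i = 0 := by
    refine (Finset.sum_eq_zero_iff_of_nonneg fun i _ => ?_).1 h
    simp only [Matrix.diag_apply, Matrix.mul_apply, Matrix.transpose_apply]
    exact Finset.sum_nonneg fun j _ => mul_self_nonneg _
  ext j i
  have h2 := h1 i (Finset.mem_univ i)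
  simp only [Matrix.diag_apply, Matrix.mul_apply, Matrix.transpose_apply] at h2
  have h3 : ∀ k ∈ Finset.univ, M k i * M k i = 0 :=
    (Finset.sum_eq_zero_iff_of_nonneg fun k _ => mul_self_nonneg _).1 h2
  have := h3 j (Finset.mem_univ j)
  simpa [mul_self_eq_zero] using this

lemma psdTraceNonneg {A : Matrix n n ℝ} (hA : A.PosSemidef) : 0 ≤ A.trace := by
  rw [Matrix.trace]
  refine Finset.sum_nonneg fun i _ => ?_
  have := hA.dotProduct_mulVec_nonneg (Pi.single i 1)
  simpa [single_dotProduct, Matrix.mulVec_single] using this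

/-- Lyapunov-type uniqueness: if `A` is PSD and invertible and `Z*A + A*Z = 0` then `Z = 0`. -/
lemma myLyap {A Z : Matrix n n ℝ} (hA : A.PosSemidef) (hAu : IsUnit A)
    (hZ : Z * A + A * Z = 0) : Z = 0 := by
  have hAt : Aᵀ = A := by
    have := hA.1
    rwa [Matrix.IsHermitian, Matrix.conjTranspose_eq_transpose_of_trivial] at this
  have h1 : Z * A = -(A * Z) := eq_neg_of_add_eq_zero_left hZ
  have h2 : A * Zᵀ = -(Zᵀ * A) := by
    have := congrArg Matrix.transpose h1
    rwa [Matrix.transpose_mul, Matrix.transpose_neg, Matrix.transpose_mul, hAt] at this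
  open scoped MatrixOrder in
  set B := CFC.sqrt A with hBdef
  open scoped MatrixOrder in
  have hB2 : B * B = A := CFC.sqrt_mul_sqrt_self A hA.nonneg
  open scoped MatrixOrder in
  have hBpsd : B.PosSemidef := (CFC.sqrt_nonneg A).posSemidef
  have hBt : Bᵀ = B := by
    have := hBpsd.1
    rwa [Matrix.IsHermitian, Matrix.conjTranspose_eq_transpose_of_trivial] at this
  have e1 : A * Zᵀ * A * Z = -((A * Z)ᵀ * (A * Z)) := by
    rw [Matrix.transpose_mul, hAt, h2]
    noncomm_ring
  have e2 : (A * Zᵀ * A * Z).trace = ((Z * B)ᵀ * A * (Z * B)).trace := by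
    have : A * Zᵀ * A * Z = B * (B * Zᵀ * A * Z) := by rw [← hB2]; noncomm_ring
    rw [this, Matrix.trace_mul_comm]
    congr 1
    rw [Matrix.transpose_mul, hBt]
    noncomm_ring
  have hpsd : ((Z * B)ᵀ * A * (Z * B)).PosSemidef := by
    have := hA.conjTranspose_mul_mul_same (Z * B)
    rwa [Matrix.conjTranspose_eq_transpose_of_trivial] at this
  have hge : 0 ≤ (A * Zᵀ * A * Z).trace := e2 ▸ psdTraceNonneg hpsd
  have hle : (A * Zᵀ * A * Z).trace = -((A * Z)ᵀ * (A * Z)).trace := by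
    rw [e1, Matrix.trace_neg]
  have h0 : ((A * Z)ᵀ * (A * Z)).trace = 0 :=
    le_antisymm (by linarith [hle ▸ hge]) (myTraceNonneg (A * Z))
  have hAZ : A * Z = 0 := myTraceZero h0
  have hdet : IsUnit A.det := (Matrix.isUnit_iff_isUnit_det A).1 hAu
  calc Z = (A⁻¹ * A) * Z := by rw [Matrix.nonsing_inv_mul A hdet, one_mul]
  _ = A⁻¹ * (A * Z) := by rw [mul_assoc]
  _ = 0 := by rw [hAZ, mul_zero]

lemma myCongr {A : Matrix n n ℝ} (hA : A.PosDef) {B : Matrix n n ℝ} (hB : IsUnit B) :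
    (Bᴴ * A * B).PosDef := by
  refine Matrix.posDef_iff_dotProduct_mulVec.2 ⟨Matrix.isHermitian_conjTranspose_mul_mul B hA.1, fun x hx => ?_⟩
  have hx' : B *ᵥ x ≠ 0 :=
    ((Matrix.mulVec_injective_iff_isUnit.mpr hB).ne_iff' (Matrix.mulVec_zero B)).2 hx
  simpa only [star_mulVec, Matrix.dotProduct_mulVec, Matrix.vecMul_vecMul] using hA.dotProduct_mulVec_pos hx'

lemma mySmul {A : Matrix n n ℝ} (hA : A.PosDef) {c : ℝ} (hc : 0 < c) : (c • A).PosDef := by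
  refine Matrix.posDef_iff_dotProduct_mulVec.2 ⟨?_, fun x hx => ?_⟩
  · have h := hA.1
    rw [Matrix.IsHermitian] at h ⊢
    rw [Matrix.conjTranspose_smul, h, star_trivial]
  · rw [Matrix.smul_mulVec, dotProduct_smul, smul_eq_mul]
    exact mul_pos hc (hA.dotProduct_mulVec_pos hx)

end aux

theorem stmt_16 (Pa Pb Pc : Matrix (Fin 3) (Fin 3) ℝ)
    (hPa : Pa.PosDef) (hPaSymm : Paᵀ = Pa)
    (hPb : Pb.PosDef) (hPbSymm : Pbᵀ = Pb)
    (σω σb : ℝ) (hσω : 0 < σω) (hσb : 0 < σb)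
    (hRic : Pa * Pb⁻¹ + Pb⁻¹ * Pa
      = (-(σω ^ 2 / σb ^ 2)) • (1 : Matrix (Fin 3) (Fin 3) ℝ) + Pb ^ 2)
    (hPc : Pc = (-(σb ^ 2)) • (Pa * Pb⁻¹)) :
    Pa * Pb = Pb * Pa ∧ Pcᵀ = Pc ∧ (-Pc).PosDef := by
  have hdet : IsUnit Pb.det := hPb.det_pos.ne'.isUnit
  have hinv : Pb * Pb⁻¹ = 1 := Matrix.mul_nonsing_inv Pb hdet
  have hinv' : Pb⁻¹ * Pb = 1 := Matrix.nonsing_inv_mul Pb hdet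
  have hAinv : (Pb⁻¹).PosDef := hPb.inv
  set Q : Matrix (Fin 3) (Fin 3) ℝ :=
    (-(σω ^ 2 / σb ^ 2)) • (1 : Matrix (Fin 3) (Fin 3) ℝ) + Pb ^ 2 with hQdef
  -- Q commutes with Pb
  have hQb : Q * Pb = Pb * Q := by
    have e : Pb ^ 2 * Pb = Pb * Pb ^ 2 := by rw [← pow_succ, ← pow_succ']
    rw [hQdef, add_mul, mul_add, e, smul_mul_assoc, mul_smul_comm, one_mul, mul_one]
  -- the conjugated matrix solves the same Lyapunov equation
  have hY : (Pb⁻¹ * Pa * Pb) * Pb⁻¹ + Pb⁻¹ * (Pb⁻¹ * Pa * Pb) = Q := by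
    have e1 : (Pb⁻¹ * Pa * Pb) * Pb⁻¹ = Pb⁻¹ * (Pa * Pb⁻¹) * Pb := by
      calc (Pb⁻¹ * Pa * Pb) * Pb⁻¹ = Pb⁻¹ * Pa * (Pb * Pb⁻¹) := by noncomm_ring
      _ = Pb⁻¹ * Pa := by rw [hinv, mul_one]
      _ = Pb⁻¹ * (Pa * (Pb⁻¹ * Pb)) := by rw [hinv', mul_one]
      _ = Pb⁻¹ * (Pa * Pb⁻¹) * Pb := by noncomm_ring
    have e2 : Pb⁻¹ * (Pb⁻¹ * Pa * Pb) = Pb⁻¹ * (Pb⁻¹ * Pa) * Pb := by noncomm_ring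
    have e3 : Pb⁻¹ * (Pa * Pb⁻¹) * Pb + Pb⁻¹ * (Pb⁻¹ * Pa) * Pb
        = Pb⁻¹ * ((Pa * Pb⁻¹ + Pb⁻¹ * Pa) * Pb) := by noncomm_ring
    rw [e1, e2, e3, hRic, hQb, ← mul_assoc, hinv', one_mul]
  have hZ : (Pa - Pb⁻¹ * Pa * Pb) * Pb⁻¹ + Pb⁻¹ * (Pa - Pb⁻¹ * Pa * Pb) = 0 := by
    have : (Pa - Pb⁻¹ * Pa * Pb) * Pb⁻¹ + Pb⁻¹ * (Pa - Pb⁻¹ * Pa * Pb)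
        = (Pa * Pb⁻¹ + Pb⁻¹ * Pa) - ((Pb⁻¹ * Pa * Pb) * Pb⁻¹ + Pb⁻¹ * (Pb⁻¹ * Pa * Pb)) := by
      noncomm_ring
    rw [this, hRic, hY, sub_self]
  have hZ0 : Pa - Pb⁻¹ * Pa * Pb = 0 := myLyap hAinv.posSemidef hAinv.isUnit hZ
  have hPaEq : Pa = Pb⁻¹ * Pa * Pb := sub_eq_zero.mp hZ0
  have hcomm : Pa * Pb = Pb * Pa := by
    have e : Pb * Pa = Pb * (Pb⁻¹ * Pa * Pb) := by rw [← hPaEq]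
    rw [e, show Pb * (Pb⁻¹ * Pa * Pb) = (Pb * Pb⁻¹) * (Pa * Pb) from by noncomm_ring,
      hinv, one_mul]
  have comm' : Pa * Pb⁻¹ = Pb⁻¹ * Pa := by
    calc Pa * Pb⁻¹ = (Pb⁻¹ * Pb) * (Pa * Pb⁻¹) := by rw [hinv', one_mul]
    _ = Pb⁻¹ * (Pb * Pa) * Pb⁻¹ := by noncomm_ring
    _ = Pb⁻¹ * (Pa * Pb) * Pb⁻¹ := by rw [hcomm]
    _ = (Pb⁻¹ * Pa) * (Pb * Pb⁻¹) := by noncomm_ring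
    _ = Pb⁻¹ * Pa := by rw [hinv, mul_one]
  refine ⟨hcomm, ?_, ?_⟩
  · rw [hPc, Matrix.transpose_smul, Matrix.transpose_mul, Matrix.transpose_nonsing_inv,
      hPbSymm, hPaSymm, ← comm']
  · -- positive definiteness of -Pc
    open scoped MatrixOrder in
    set C := CFC.sqrt Pb⁻¹ with hCdef
    open scoped MatrixOrder in
    have hC2 : C * C = Pb⁻¹ := CFC.sqrt_mul_sqrt_self Pb⁻¹ hAinv.posSemidef.nonneg
    open scoped MatrixOrder in
    have hCpsd : C.PosSemidef := (CFC.sqrt_nonneg Pb⁻¹).posSemidef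
    have hCdetne : C.det ≠ 0 := by
      intro h
      have : (C * C).det = 0 := by rw [Matrix.det_mul, h, mul_zero]
      rw [hC2] at this
      exact hAinv.det_pos.ne' this
    have hCu : IsUnit C := (Matrix.isUnit_iff_isUnit_det C).2 hCdetne.isUnit
    have hZc : (Pa * C - C * Pa) * C + C * (Pa * C - C * Pa) = 0 := by
      have e : (Pa * C - C * Pa) * C + C * (Pa * C - C * Pa)
          = Pa * (C * C) - (C * C) * Pa := by noncomm_ring
      rw [e, hC2, ← comm', sub_self]
    have hPaC : Pa * C = C * Pa := sub_eq_zero.mp (myLyap hCpsd hCu hZc)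
    have hCh : Cᴴ = C := hCpsd.1
    have hfinal : Pa * Pb⁻¹ = Cᴴ * Pa * C := by
      rw [hCh]
      calc Pa * Pb⁻¹ = Pa * (C * C) := by rw [hC2]
      _ = (Pa * C) * C := by rw [mul_assoc]
      _ = (C * Pa) * C := by rw [hPaC]
    have hPos : (Pa * Pb⁻¹).PosDef := hfinal ▸ myCongr hPa hCu
    have hnegPc : -Pc = (σb ^ 2) • (Pa * Pb⁻¹) := by
      rw [hPc, neg_smul, neg_neg]
    rw [hnegPc]
    exact mySmul hPos (pow_pos hσb 2)
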